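/- arXiv:2403.00576 — 2 statements merged into one kernel-verified Lean document; each statement's English description precedes it below -/
import Mathlib

section
/- For any nonzero Hilbert–Schmidt operator S on L^2(R^d), the closed linear span of the set {π(z) S π(w)^* : w, z ∈ R^{2d}} equals the whole space of Hilbert–Schmidt operators. -/
open MeasureTheory Complex Filter Topology
open scoped ENNReal

noncomputable section

abbrev Rd (d : ℕ) := Fin d → ℝ
abbrev Phase (d : ℕ) := Rd d × Rd d

/-- Euclidean dot product on `ℝ^d`. -/
def dotR {d : ℕ} (x y : Rd d) : ℝ := ∑ i, x i * y i

/-- `e2pi r = e^{2πi r}`. -/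
def e2pi (r : ℝ) : ℂ := Complex.exp ((2 * Real.pi * r : ℝ) * Complex.I)

/-- Time-frequency shift `π(z) = M_ω T_x` acting on functions on `ℝ^d`. -/
def tfs {d : ℕ} (z : Phase d) (f : Rd d → ℂ) : Rd d → ℂ :=
  fun t => e2pi (dotR z.2 t) * f (t - z.1)

/-- Short-time Fourier transform `V_g f (z) = ⟨f, π(z) g⟩`. -/
def Vst {d : ℕ} (g f : Rd d → ℂ) (z : Phase d) : ℂ :=
  ∫ t : Rd d, f t * (starRingEnd ℂ) (tfs z g t)

/-- Integral kernel of the rank-one operator `f ⊗ g : h ↦ ⟨h,g⟩ f`. -/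
def kerRankOne {d : ℕ} (f g : Rd d → ℂ) : Rd d × Rd d → ℂ :=
  fun p => f p.1 * (starRingEnd ℂ) (g p.2)

/-- Hilbert–Schmidt inner product `⟨S,T⟩ = tr(S T^*)` in terms of integral kernels. -/
def innerHS {d : ℕ} (K L : Rd d × Rd d → ℂ) : ℂ :=
  ∫ p : Rd d × Rd d, K p * (starRingEnd ℂ) (L p)

/-- Kernel of `γ_{w,z}(S) = π(z) S π(w)^*`, in terms of the kernel `K` of `S`. -/
def gammaK {d : ℕ} (w z : Phase d) (K : Rd d × Rd d → ℂ) : Rd d × Rd d → ℂ :=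
  fun p => e2pi (dotR z.2 p.1 - dotR w.2 p.2) * K (p.1 - z.1, p.2 - w.1)

/-- Polarised Cohen's class `Q_S T (w,z) = ⟨T, γ_{w,z}(S)⟩_{HS}`, in terms of kernels. -/
def QK {d : ℕ} (KS KT : Rd d × Rd d → ℂ) (w z : Phase d) : ℂ :=
  innerHS KT (gammaK w z KS)

/-! ### Auxiliary lemmas -/

section Aux

set_option maxHeartbeats 1000000

open scoped FourierTransform RealInnerProductSpace

variable {V : Type*} [NormedAddCommGroup V] [InnerProductSpace ℝ V]
  [MeasurableSpace V] [BorelSpace V] [FiniteDimensional ℝ V]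

/-- A smooth compactly supported function, as a Schwartz map. -/
def toSchwartz (g : V → ℝ) (hg : ContDiff ℝ ((⊤ : ℕ∞) : WithTop ℕ∞) g)
    (hsupp : HasCompactSupport g) : SchwartzMap V ℂ where
  toFun := fun v => (g v : ℂ)
  smooth' := Complex.ofRealCLM.contDiff.comp hg
  decay' := by
    intro k n
    have hsupp' : HasCompactSupport (fun v => (g v : ℂ)) :=
      hsupp.comp_left (g := fun r : ℝ => (r : ℂ)) (by simp)
    have hsm : ContDiff ℝ ((⊤ : ℕ∞) : WithTop ℕ∞) (fun v => (g v : ℂ)) :=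
      Complex.ofRealCLM.contDiff.comp hg
    have h1 : HasCompactSupport fun v => iteratedFDeriv ℝ n (fun v => (g v : ℂ)) v :=
      hsupp'.iteratedFDeriv n
    have h2 : HasCompactSupport fun v => ‖v‖ ^ k * ‖iteratedFDeriv ℝ n (fun v => (g v : ℂ)) v‖ :=
      (h1.norm).mul_left (f := fun v => ‖v‖ ^ k)
    have hcont : Continuous fun v => ‖v‖ ^ k * ‖iteratedFDeriv ℝ n (fun v => (g v : ℂ)) v‖ :=
      (continuous_norm.pow k).mul
        ((hsm.continuous_iteratedFDeriv (by exact_mod_cast le_top)).norm)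
    obtain ⟨C, hC⟩ := h2.exists_bound_of_continuous hcont
    refine ⟨C, fun x => (le_abs_self _).trans ?_⟩
    have := hC x
    rwa [Real.norm_eq_abs] at this

/-- Uniqueness for the Fourier transform of integrable functions. -/
lemma fourier_uniqueness {f : V → ℂ} (hf : Integrable f)
    (h : ∀ ξ : V, 𝓕 f ξ = 0) : f =ᵐ[volume] 0 := by
  apply ae_eq_zero_of_integral_contDiff_smul_eq_zero hf.locallyIntegrable
  intro g hg hsupp
  set G : SchwartzMap V ℂ := toSchwartz g hg hsupp with hG
  set h0 : SchwartzMap V ℂ := (FourierTransform.fourierCLE ℂ (SchwartzMap V ℂ)).symm G with hh0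
  have hFh0 : 𝓕 (⇑h0) = ⇑G := by
    rw [← SchwartzMap.fourier_coe, ← FourierTransform.fourierCLE_apply (R := ℂ) h0, hh0,
      (FourierTransform.fourierCLE ℂ (SchwartzMap V ℂ)).apply_symm_apply]
  have flip : ∫ ξ, (𝓕 f ξ) • (h0 ξ) = ∫ x, f x • 𝓕 (⇑h0) x := by
    have := VectorFourier.integral_fourierIntegral_smul_eq_flip (L := innerₗ V)
      (μ := (volume : Measure V)) (ν := (volume : Measure V))
      Real.continuous_fourierChar continuous_inner hf h0.integrable
    rw [show (innerₗ V).flip = innerₗ V from by ext; simp [real_inner_comm]] at this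
    exact this
  have hz : ∫ x, f x • (G x) = 0 := by
    rw [← hFh0, ← flip]
    simp [h]
  have hGcoe : ⇑G = fun v => (g v : ℂ) := rfl
  have : (fun x => g x • f x) = fun x => f x • (G x) := by
    funext x
    rw [hGcoe]
    simp [Complex.real_smul, smul_eq_mul, mul_comm]
  rw [this, hz]

abbrev E2 (d : ℕ) := EuclideanSpace ℝ (Fin d ⊕ Fin d)

def prodEquivE2 (d : ℕ) : (Rd d × Rd d) ≃ᵐ E2 d :=
  (MeasurableEquiv.sumPiEquivProdPi (fun _ : Fin d ⊕ Fin d => ℝ)).symm.trans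
    (MeasurableEquiv.toLp 2 (Fin d ⊕ Fin d → ℝ))

lemma prodEquivE2_measurePreserving (d : ℕ) :
    MeasurePreserving (prodEquivE2 d) volume volume :=
  ((EuclideanSpace.volume_preserving_symm_measurableEquiv_toLp (Fin d ⊕ Fin d)).symm _).comp
    (volume_measurePreserving_sumPiEquivProdPi_symm (fun _ : Fin d ⊕ Fin d => ℝ))

lemma prodEquivE2_apply_inl {d : ℕ} (p : Rd d × Rd d) (i : Fin d) :
    (prodEquivE2 d p) (Sum.inl i) = p.1 i := rfl

lemma prodEquivE2_apply_inr {d : ℕ} (p : Rd d × Rd d) (i : Fin d) :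
    (prodEquivE2 d p) (Sum.inr i) = p.2 i := rfl

lemma inner_prodEquivE2 {d : ℕ} (ξ : E2 d) (p : Rd d × Rd d) :
    (inner ℝ (prodEquivE2 d p) ξ : ℝ) =
      dotR (fun i => ξ (Sum.inl i)) p.1 + dotR (fun i => ξ (Sum.inr i)) p.2 := by
  rw [PiLp.inner_apply, Fintype.sum_sum_type]
  simp only [RCLike.inner_apply, conj_trivial, prodEquivE2_apply_inl, prodEquivE2_apply_inr, dotR]

/-- Uniqueness for the Fourier transform on `ℝ^d × ℝ^d`, phrased with `e2pi` and `dotR`. -/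
lemma fourier_uniqueness_prod {d : ℕ} {F : Rd d × Rd d → ℂ} (hF : Integrable F)
    (h : ∀ a b : Rd d, ∫ p : Rd d × Rd d, e2pi (-(dotR a p.1 + dotR b p.2)) * F p = 0) :
    F =ᵐ[volume] 0 := by
  set Φ := prodEquivE2 d with hΦdef
  have mpΦ := prodEquivE2_measurePreserving d
  set F' : E2 d → ℂ := F ∘ Φ.symm with hF'def
  have hcomp : F' ∘ Φ = F := by
    funext p; simp [hF'def]
  have hF' : Integrable F' volume := by
    rw [← mpΦ.integrable_comp_emb Φ.measurableEmbedding, hcomp]; exact hF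
  have hFou : ∀ ξ : E2 d, 𝓕 F' ξ = 0 := by
    intro ξ
    rw [Real.fourier_eq, ← mpΦ.integral_comp Φ.measurableEmbedding]
    rw [← h (fun i => ξ (Sum.inl i)) (fun i => ξ (Sum.inr i))]
    congr 1
    funext p
    rw [inner_prodEquivE2 ξ p]
    have : F' (Φ p) = F p := by simp [hF'def]
    rw [this, Circle.smul_def, Real.fourierChar_apply, e2pi]
    norm_num
  have h0 : F' =ᵐ[volume] 0 := fourier_uniqueness hF' hFou
  have := mpΦ.quasiMeasurePreserving.ae_eq_comp h0
  rwa [hcomp] at this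

lemma e2pi_norm (r : ℝ) : ‖e2pi r‖ = 1 := by
  simp [e2pi, Complex.norm_exp]

lemma conj_e2pi (r : ℝ) : (starRingEnd ℂ) (e2pi r) = e2pi (-r) := by
  rw [e2pi, e2pi, ← Complex.exp_conj, map_mul, Complex.conj_ofReal, Complex.conj_I]
  push_cast
  ring_nf

lemma dotR_neg {d : ℕ} (x y : Rd d) : dotR (-x) y = -dotR x y := by
  simp [dotR, neg_mul]

lemma continuous_dotR {d : ℕ} (x : Rd d) : Continuous (fun y : Rd d => dotR x y) :=
  continuous_finset_sum _ (fun i _ => continuous_const.mul (continuous_apply i))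

lemma continuous_e2pi : Continuous e2pi :=
  Complex.continuous_exp.comp
    ((Complex.continuous_ofReal.comp (continuous_const.mul continuous_id)).mul continuous_const)

lemma memℒp_gammaK {d : ℕ} (S : Lp ℂ 2 (volume : Measure (Rd d × Rd d))) (w z : Phase d) :
    MemLp (gammaK w z (⇑S)) 2 (volume : Measure (Rd d × Rd d)) := by
  have hτ : MeasurePreserving (fun p : Rd d × Rd d => (p.1 - z.1, p.2 - w.1))
      volume volume :=
    (measurePreserving_sub_right volume z.1).prod (measurePreserving_sub_right volume w.1)
  have h1 : MemLp ((⇑S) ∘ fun p : Rd d × Rd d => (p.1 - z.1, p.2 - w.1)) 2 volume :=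
    (Lp.memLp S).comp_measurePreserving hτ
  have hphase : Continuous (fun p : Rd d × Rd d => e2pi (dotR z.2 p.1 - dotR w.2 p.2)) :=
    continuous_e2pi.comp (((continuous_dotR z.2).comp continuous_fst).sub
      ((continuous_dotR w.2).comp continuous_snd))
  refine h1.of_le (hphase.aestronglyMeasurable.mul h1.1) (Filter.Eventually.of_forall fun p => ?_)
  simp only [gammaK, Function.comp_apply, norm_mul, e2pi_norm, one_mul, le_refl]

/-- Product of two `L²` functions is integrable. -/
lemma integrable_mul_of_memL2 {α : Type*} [MeasurableSpace α] {μ : Measure α}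
    {f g : α → ℂ} (hf : MemLp f 2 μ) (hg : MemLp g 2 μ) :
    Integrable (fun x => f x * g x) μ := by
  rw [← memLp_one_iff_integrable]
  exact hg.smul hf

lemma memℒp_conj {α : Type*} [MeasurableSpace α] {μ : Measure α} {f : α → ℂ}
    (hf : MemLp f 2 μ) : MemLp (fun x => (starRingEnd ℂ) (f x)) 2 μ := by
  refine hf.of_le (Complex.continuous_conj.comp_aestronglyMeasurable hf.1) ?_
  filter_upwards with x
  simp

end Aux

/-- For any nonzero Hilbert–Schmidt operator `S` (represented by its kernel in
`L²(ℝ^{2d})`), the closed linear span of `{π(z) S π(w)^* : w, z ∈ ℝ^{2d}}` is the whole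
space of Hilbert–Schmidt operators. -/
theorem gamma_orbit_span_dense {d : ℕ}
    (S : Lp ℂ 2 (volume : Measure (Rd d × Rd d))) (hS : S ≠ 0) :
    (Submodule.span ℂ
        {T : Lp ℂ 2 (volume : Measure (Rd d × Rd d)) |
          ∃ w z : Phase d, (⇑T : Rd d × Rd d → ℂ) =ᵐ[volume] gammaK w z ⇑S}).topologicalClosure
      = ⊤ := by
  set_option maxHeartbeats 1000000 in
  rw [Submodule.topologicalClosure_eq_top_iff, Submodule.eq_bot_iff]
  intro U hU
  -- Step 1: the orthogonality relations.
  have key : ∀ w z : Phase d,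
      ∫ p : Rd d × Rd d, (starRingEnd ℂ) (gammaK w z (⇑S) p) * U p = 0 := by
    intro w z
    have hmem : MemLp (gammaK w z (⇑S)) 2 (volume : Measure (Rd d × Rd d)) :=
      memℒp_gammaK S w z
    set T := hmem.toLp _ with hT
    have hTmem : T ∈ {T : Lp ℂ 2 (volume : Measure (Rd d × Rd d)) |
        ∃ w z : Phase d, (⇑T : Rd d × Rd d → ℂ) =ᵐ[volume] gammaK w z ⇑S} :=
      ⟨w, z, hmem.coeFn_toLp⟩
    have h0 : (inner ℂ T U : ℂ) = 0 :=
      (Submodule.mem_orthogonal _ U).1 hU T (Submodule.subset_span hTmem)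
    rw [L2.inner_def] at h0
    rw [← h0]
    apply integral_congr_ae
    filter_upwards [hmem.coeFn_toLp] with p hp
    rw [RCLike.inner_apply, hp, mul_comm]
  -- Step 2: pointwise vanishing of shifted products, via Fourier uniqueness.
  have hz : ∀ a : Phase d,
      (fun p : Rd d × Rd d => (starRingEnd ℂ) (⇑S (p.1 - a.1, p.2 - a.2)) * U p)
        =ᵐ[volume] 0 := by
    intro a
    have hτ : MeasurePreserving (fun p : Rd d × Rd d => (p.1 - a.1, p.2 - a.2))
        volume volume :=
      (measurePreserving_sub_right volume a.1).prod (measurePreserving_sub_right volume a.2)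
    have hSmem : MemLp ((⇑S) ∘ fun p : Rd d × Rd d => (p.1 - a.1, p.2 - a.2)) 2 volume :=
      (Lp.memLp S).comp_measurePreserving hτ
    have hint : Integrable
        (fun p : Rd d × Rd d => (starRingEnd ℂ) (⇑S (p.1 - a.1, p.2 - a.2)) * U p) volume :=
      integrable_mul_of_memL2 (memℒp_conj hSmem) (Lp.memLp U)
    apply fourier_uniqueness_prod hint
    intro b c
    have := key (a.2, -c) (a.1, b)
    rw [← this]
    congr 1
    funext p
    simp only [gammaK]
    rw [map_mul, conj_e2pi, mul_assoc]
    congr 2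
    rw [dotR_neg]
    ring_nf
  -- Step 3: Fubini argument to conclude `U = 0`.
  have hSaesm := Lp.aestronglyMeasurable S
  have hUaesm := Lp.aestronglyMeasurable U
  set Sm := hSaesm.mk (⇑S) with hSmdef
  set Um := hUaesm.mk (⇑U) with hUmdef
  have hSmm : Measurable Sm := hSaesm.stronglyMeasurable_mk.measurable
  have hUmm : Measurable Um := hUaesm.stronglyMeasurable_mk.measurable
  have hSmeq : ⇑S =ᵐ[volume] Sm := hSaesm.ae_eq_mk
  have hUmeq : ⇑U =ᵐ[volume] Um := hUaesm.ae_eq_mk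
  set G : Phase d × Phase d → ℝ≥0∞ :=
    fun q => (‖Sm (q.2 - q.1)‖₊ : ℝ≥0∞) * (‖Um q.2‖₊ : ℝ≥0∞) with hGdef
  have hGmeas : Measurable G :=
    ((hSmm.comp (measurable_snd.sub measurable_fst)).nnnorm.coe_nnreal_ennreal).mul
      ((hUmm.comp measurable_snd).nnnorm.coe_nnreal_ennreal)
  have hInner0 : ∀ a : Phase d, ∫⁻ p : Phase d, G (a, p) ∂volume = 0 := by
    intro a
    have hτ : MeasurePreserving (fun p : Phase d => p - a)
        (volume : Measure (Phase d)) volume :=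
      (measurePreserving_sub_right volume a.1).prod (measurePreserving_sub_right volume a.2)
    have hshift : (fun p : Phase d => (⇑S) (p - a)) =ᵐ[volume] fun p => Sm (p - a) :=
      hτ.quasiMeasurePreserving.ae_eq_comp hSmeq
    have hae : (fun p : Phase d => G (a, p)) =ᵐ[volume] 0 := by
      filter_upwards [hz a, hshift, hUmeq] with p h1 h2 h3
      have : (starRingEnd ℂ) (Sm (p - a)) * Um p = 0 := by
        rw [← h2, ← h3]
        exact h1
      have h4 : (‖Sm (p - a)‖₊ : ℝ≥0∞) * (‖Um p‖₊ : ℝ≥0∞) = 0 := by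
        have := congrArg (fun t : ℂ => (‖t‖₊ : ℝ≥0∞)) this
        simpa [nnnorm_mul, ENNReal.coe_mul] using this
      simpa [hGdef] using h4
    rw [lintegral_congr_ae hae]
    simp
  have htot : ∫⁻ q : Phase d × Phase d, G q ∂((volume : Measure (Phase d)).prod volume) = 0 := by
    rw [lintegral_prod _ hGmeas.aemeasurable]
    rw [lintegral_congr (fun a => hInner0 a), lintegral_zero]
  have hswap : ∫⁻ p : Phase d, (∫⁻ a : Phase d, G (a, p) ∂volume) ∂volume = 0 := by
    rw [← lintegral_prod_symm _ hGmeas.aemeasurable]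
    exact htot
  set C : ℝ≥0∞ := ∫⁻ x : Phase d, (‖Sm x‖₊ : ℝ≥0∞) ∂volume with hCdef
  have hshiftC : ∀ p : Phase d, ∫⁻ a : Phase d, (‖Sm (p - a)‖₊ : ℝ≥0∞) ∂volume = C := by
    intro p
    have h1 : MeasurePreserving (fun a : Phase d => -a) volume volume :=
      (Measure.measurePreserving_neg volume).prod (Measure.measurePreserving_neg volume)
    have h2 : MeasurePreserving (fun a : Phase d => p + a) volume volume :=
      (measurePreserving_add_left volume p.1).prod (measurePreserving_add_left volume p.2)
    have hmp : MeasurePreserving (fun a : Phase d => p - a) volume volume := by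
      have := h2.comp h1
      simpa [Function.comp_def, sub_eq_add_neg] using this
    exact hmp.lintegral_comp (hSmm.nnnorm.coe_nnreal_ennreal)
  have hinner2 : ∀ p : Phase d,
      ∫⁻ a : Phase d, G (a, p) ∂volume = C * (‖Um p‖₊ : ℝ≥0∞) := by
    intro p
    have hGap : (fun a : Phase d => G (a, p))
        = fun a : Phase d => (‖Sm (p - a)‖₊ : ℝ≥0∞) * (‖Um p‖₊ : ℝ≥0∞) := rfl
    calc ∫⁻ a : Phase d, G (a, p) ∂volume
        = ∫⁻ a : Phase d, (‖Sm (p - a)‖₊ : ℝ≥0∞) * (‖Um p‖₊ : ℝ≥0∞) ∂volume := by rw [hGap]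
      _ = (∫⁻ a : Phase d, (‖Sm (p - a)‖₊ : ℝ≥0∞) ∂volume) * (‖Um p‖₊ : ℝ≥0∞) :=
          lintegral_mul_const' _ _ ENNReal.coe_ne_top
      _ = C * (‖Um p‖₊ : ℝ≥0∞) := by rw [hshiftC p]
  have hC : C ≠ 0 := by
    intro hC0
    have : (fun x : Phase d => (‖Sm x‖₊ : ℝ≥0∞)) =ᵐ[volume] 0 :=
      (lintegral_eq_zero_iff (hSmm.nnnorm.coe_nnreal_ennreal)).1 hC0
    have hS0 : ⇑S =ᵐ[volume] 0 := by
      filter_upwards [hSmeq, this] with x h1 h2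
      simp only [Pi.zero_apply] at h2 ⊢
      rw [h1]
      simpa using h2
    exact hS ((Lp.eq_zero_iff_ae_eq_zero).2 hS0)
  have hU0 : ∀ᵐ p : Phase d ∂volume, C * (‖Um p‖₊ : ℝ≥0∞) = 0 := by
    rw [lintegral_congr hinner2] at hswap
    exact (lintegral_eq_zero_iff ((measurable_const.mul (hUmm.nnnorm.coe_nnreal_ennreal)))).1 hswap
  have : ⇑U =ᵐ[volume] 0 := by
    filter_upwards [hUmeq, hU0] with p h1 h2
    rcases mul_eq_zero.1 h2 with h | h
    · exact absurd h hC
    · simp only [Pi.zero_apply]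
      rw [h1]
      simpa using h
  exact (Lp.eq_zero_iff_ae_eq_zero).2 this
end
end

section
/- For w ∈ R^{2d} and S a Hilbert–Schmidt operator, define the operator modulation β_w(S) := e^{-πi w1·w2/2} π(w/2) S π(w/2). Then the Weyl symbol satisfies σ_{β_w(S)} = M_w σ_S, where M_w is the symplectic modulation M_w F(z) = e^{2πi Ω(z,w)} F(z) with Ω the standard symplectic form Ω(z,w) = x·η − ξ·y for z=(x,ξ), w=(y,η). Equivalently, the spreading function satisfies F_W(β_w(S))(z) = F_W(S)(z − w). -/
open MeasureTheory Complex Filter Topology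
open scoped ENNReal

noncomputable section

/-- Weyl symbol of the operator with integral kernel `K`. -/
def weylSymbol {d : ℕ} (K : Rd d × Rd d → ℂ) : Phase d → ℂ :=
  fun p => ∫ t : Rd d,
    e2pi (-(dotR p.2 t)) * K (p.1 + (2:ℝ)⁻¹ • t, p.1 - (2:ℝ)⁻¹ • t)

/-- Kernel of the operator modulation `β_w(S) = e^{-πi w₁·w₂/2} π(w/2) S π(w/2)`,
expressed in terms of the kernel `K` of `S`. -/
def betaK {d : ℕ} (w : Phase d) (K : Rd d × Rd d → ℂ) : Rd d × Rd d → ℂ :=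
  fun p => e2pi ((2:ℝ)⁻¹ * (dotR w.2 p.1 + dotR w.2 p.2)) *
    K (p.1 - (2:ℝ)⁻¹ • w.1, p.2 + (2:ℝ)⁻¹ • w.1)

/-- Standard symplectic form `Ω(z,w) = x·η - ξ·y` for `z = (x,ξ)`, `w = (y,η)`. -/
def symp {d : ℕ} (z w : Phase d) : ℝ := dotR z.1 w.2 - dotR z.2 w.1

lemma e2pi_add (a b : ℝ) : e2pi (a + b) = e2pi a * e2pi b := by
  unfold e2pi
  rw [← Complex.exp_add]
  congr 1
  push_cast
  ring

lemma dotR_add_right {d : ℕ} (x y z : Rd d) : dotR x (y + z) = dotR x y + dotR x z := by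
  simp [dotR, mul_add, Finset.sum_add_distrib]

lemma dotR_smul_right {d : ℕ} (c : ℝ) (x y : Rd d) : dotR x (c • y) = c * dotR x y := by
  simp [dotR, Finset.mul_sum, mul_comm, mul_assoc, mul_left_comm]

lemma dotR_sub_right {d : ℕ} (x y z : Rd d) : dotR x (y - z) = dotR x y - dotR x z := by
  simp [dotR, mul_sub, Finset.sum_sub_distrib]

lemma dotR_comm {d : ℕ} (x y : Rd d) : dotR x y = dotR y x := by
  simp [dotR, mul_comm]

/-- The Weyl symbol of the operator modulation `β_w(S)` is the symplectic modulation of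
the Weyl symbol: `σ_{β_w(S)}(z) = e^{2πi Ω(z,w)} σ_S(z)`. -/
theorem weylSymbol_beta {d : ℕ} (w : Phase d) (K : Rd d × Rd d → ℂ)
    (hK : MemLp K 2 (volume : Measure (Rd d × Rd d))) (p : Phase d) :
    weylSymbol (betaK w K) p = e2pi (symp p w) * weylSymbol K p := by
  have step : weylSymbol (betaK w K) p
      = ∫ t : Rd d, e2pi (-(dotR p.2 (t + w.1))) *
          betaK w K (p.1 + (2:ℝ)⁻¹ • (t + w.1), p.1 - (2:ℝ)⁻¹ • (t + w.1)) := by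
    unfold weylSymbol
    exact (MeasureTheory.integral_add_right_eq_self
      (fun t : Rd d => e2pi (-(dotR p.2 t)) *
        betaK w K (p.1 + (2:ℝ)⁻¹ • t, p.1 - (2:ℝ)⁻¹ • t)) w.1).symm
  rw [step]
  have key : ∀ t : Rd d,
      e2pi (-(dotR p.2 (t + w.1))) *
        betaK w K (p.1 + (2:ℝ)⁻¹ • (t + w.1), p.1 - (2:ℝ)⁻¹ • (t + w.1))
      = e2pi (symp p w) *
        (e2pi (-(dotR p.2 t)) * K (p.1 + (2:ℝ)⁻¹ • t, p.1 - (2:ℝ)⁻¹ • t)) := by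
    intro t
    unfold betaK
    have harg1 : p.1 + (2:ℝ)⁻¹ • (t + w.1) - (2:ℝ)⁻¹ • w.1 = p.1 + (2:ℝ)⁻¹ • t := by
      rw [smul_add]; abel
    have harg2 : p.1 - (2:ℝ)⁻¹ • (t + w.1) + (2:ℝ)⁻¹ • w.1 = p.1 - (2:ℝ)⁻¹ • t := by
      rw [smul_add]; abel
    rw [harg1, harg2, ← mul_assoc, ← e2pi_add, ← mul_assoc, ← e2pi_add]
    congr 2
    simp only [symp, dotR_add_right, dotR_sub_right, dotR_smul_right, dotR_comm p.1 w.2]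
    ring
  simp_rw [key]
  rw [MeasureTheory.integral_const_mul]
  rfl
end
end
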